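/- Define f : ℝ → ℝ by f(x) = exp(−1/x)/x for x > 0 and f(x) = 0 for x ≤ 0, and let g(t) = t·f(t). Then: (i) f is not identically zero; (ii) f is square-integrable on ℝ (∫ f(x)² dx < ∞); (iii) g is differentiable at every point of ℝ; and (iv) for every x ∈ ℝ, x · g′(x) = f(x). Consequently f is a nonzero L²(ℝ) solution of the deficiency equation x·(d/dx)(x·f) = f arising (in the Schrödinger representation P = (1/i) d/dx, Q = multiplication by x) from the Heisenberg monomial operator M = QPQ, witnessing that the banded Hermitian operator M is not essentially selfadjoint. -/

import Mathlib

open MeasureTheory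

lemma g_eq_glue (f : ℝ → ℝ)
    (hf : ∀ x : ℝ, f x = if 0 < x then Real.exp (-1 / x) / x else 0) :
    (fun t : ℝ => t * f t) = expNegInvGlue := by
  funext t
  rw [hf t]
  by_cases ht : 0 < t
  · rw [if_pos ht, expNegInvGlue, if_neg (not_le.2 ht)]
    field_simp
  · rw [if_neg ht, expNegInvGlue, if_pos (not_lt.1 ht), mul_zero]

lemma glue_cont : Continuous expNegInvGlue :=
  (expNegInvGlue.contDiff (n := 0)).continuous

/-- The function `f(x) = exp(−1/x)/x` for `x > 0`, `f(x) = 0` for `x ≤ 0`, is a nonzero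
square-integrable solution of the deficiency equation `x·(d/dx)(x·f) = f` for the Heisenberg
monomial operator `M = QPQ`, witnessing that `M` is not essentially selfadjoint. -/
theorem heisenberg_QPQ_defect_vector (f : ℝ → ℝ)
    (hf : ∀ x : ℝ, f x = if 0 < x then Real.exp (-1 / x) / x else 0) :
    f ≠ 0
    ∧ Integrable (fun x : ℝ => (f x) ^ 2)
    ∧ (∀ x : ℝ, DifferentiableAt ℝ (fun t : ℝ => t * f t) x)
    ∧ (∀ x : ℝ, x * deriv (fun t : ℝ => t * f t) x = f x) := by
  have hg := g_eq_glue f hf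
  refine ⟨?_, ?_, ?_, ?_⟩
  · intro h
    have h1 : f 1 = 0 := congrFun h 1
    rw [hf 1, if_pos one_pos] at h1
    simp at h1
  · -- integrability
    have hunion : (Set.Iic (0:ℝ)) ∪ Set.Ioi 0 = Set.univ := Set.Iic_union_Ioi
    rw [← integrableOn_univ, ← hunion, integrableOn_union]
    constructor
    · apply (integrableOn_congr_fun ?_ measurableSet_Iic).2 (integrableOn_zero)
      intro x hx
      show f x ^ 2 = 0
      rw [hf x, if_neg (not_lt.2 hx)]
      norm_num
    · -- IntegrableOn f² (Ioi 0)
      have key : IntegrableOn (fun x : ℝ => Real.exp (-2 / x) / x ^ 2) (Set.Ioi 0) := by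
        have hcont : ContinuousWithinAt (fun x : ℝ => (1/2 : ℝ) * expNegInvGlue (x / 2))
            (Set.Ici 0) 0 :=
          ((glue_cont.comp (continuous_id.div_const 2)).const_smul
            ((1:ℝ)/2)).continuousWithinAt
        have hderiv : ∀ x ∈ Set.Ioi (0:ℝ),
            HasDerivAt (fun x : ℝ => (1/2 : ℝ) * expNegInvGlue (x / 2))
              (Real.exp (-2 / x) / x ^ 2) x := by
          intro x hx
          have hx0 : 0 < x := hx
          have heq : (fun x : ℝ => (1/2 : ℝ) * expNegInvGlue (x / 2)) =ᶠ[nhds x]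
              (fun x : ℝ => (1/2 : ℝ) * Real.exp (-2 / x)) := by
            filter_upwards [Ioi_mem_nhds hx0] with y hy
            rw [expNegInvGlue, if_neg (not_le.2 (half_pos hy))]
            rw [inv_div]
            ring_nf
          have h1 : HasDerivAt (fun t : ℝ => -2 / t) (2 / x ^ 2) x := by
            have h := (hasDerivAt_inv hx0.ne').const_mul (-2 : ℝ)
            have h2 : (2 : ℝ) / x ^ 2 = -2 * -(x ^ 2)⁻¹ := by ring
            rw [h2]
            exact h.congr_deriv rfl
          have h3 := (h1.exp).const_mul (1/2 : ℝ)
          have h4 : Real.exp (-2 / x) / x ^ 2 = (1/2 : ℝ) * (Real.exp (-2 / x) * (2 / x ^ 2)) := by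
            field_simp
          rw [h4]
          exact h3.congr_of_eventuallyEq heq
        have htend : Filter.Tendsto (fun x : ℝ => (1/2 : ℝ) * expNegInvGlue (x / 2))
            Filter.atTop (nhds (1/2 : ℝ)) := by
          have h1 : Filter.Tendsto (fun x : ℝ => (1/2 : ℝ) * Real.exp (-2 / x))
              Filter.atTop (nhds ((1/2 : ℝ) * Real.exp 0)) := by
            apply Filter.Tendsto.const_mul
            apply Real.continuous_exp.continuousAt.tendsto.comp
            simpa using tendsto_const_nhds.div_atTop (Filter.tendsto_id (α := ℝ))
          rw [Real.exp_zero, mul_one] at h1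
          apply h1.congr'
          filter_upwards [Filter.eventually_gt_atTop (0:ℝ)] with y hy
          rw [expNegInvGlue, if_neg (not_le.2 (half_pos hy))]
          rw [inv_div]
          ring_nf
        have hpos : ∀ x ∈ Set.Ioi (0:ℝ), 0 ≤ Real.exp (-2 / x) / x ^ 2 := fun x hx => by
          positivity
        exact integrableOn_Ioi_deriv_of_nonneg hcont hderiv hpos htend
      apply (integrableOn_congr_fun ?_ measurableSet_Ioi).2 key
      intro x hx
      show f x ^ 2 = Real.exp (-2 / x) / x ^ 2
      have hx0 : (0:ℝ) < x := hx
      rw [hf x, if_pos hx0, div_pow, sq (Real.exp _), ← Real.exp_add]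
      congr 2
      field_simp
      ring
  · intro x
    rw [hg]
    exact ((expNegInvGlue.contDiff (n := 1)).differentiable (by simp)).differentiableAt
  · intro x
    rw [hg]
    rcases lt_trichotomy x 0 with hx | hx | hx
    · have hd : deriv expNegInvGlue x = 0 := by
        have heq : expNegInvGlue =ᶠ[nhds x] (fun _ => (0:ℝ)) := by
          filter_upwards [Iio_mem_nhds hx] with y hy
          exact expNegInvGlue.zero_of_nonpos hy.le
        rw [heq.deriv_eq, deriv_const]
      rw [hd, mul_zero, hf x, if_neg (not_lt.2 hx.le)]
    · rw [hx, zero_mul, hf 0, if_neg (lt_irrefl 0)]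
    · have heq : expNegInvGlue =ᶠ[nhds x] (fun t => Real.exp (-1 / t)) := by
        filter_upwards [Ioi_mem_nhds hx] with y hy
        rw [expNegInvGlue, if_neg (not_le.2 hy)]
        congr 1
        rw [neg_div, one_div]
      have h1 : HasDerivAt (fun t : ℝ => Real.exp (-1 / t)) (Real.exp (-1 / x) / x ^ 2) x := by
        have h0 : HasDerivAt (fun t : ℝ => -1 / t) (1 / x ^ 2) x := by
          have h := (hasDerivAt_inv hx.ne').const_mul (-1 : ℝ)
          have h2 : (1 : ℝ) / x ^ 2 = -1 * -(x ^ 2)⁻¹ := by ring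
          rw [h2]
          exact h.congr_deriv rfl
        have h3 := h0.exp
        have h4 : Real.exp (-1 / x) / x ^ 2 = Real.exp (-1 / x) * (1 / x ^ 2) := by ring
        rw [h4]
        exact h3
      rw [heq.deriv_eq, h1.deriv, hf x, if_pos hx]
      field_simp
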